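/- Let G₁ and G₂ be graphs on a common finite vertex set V, and call the edges of G₁ red and the edges of G₂ blue. If the coloured graph G = G₁ ∪ G₂ contains no alternating cycle (neither even nor odd), then G₁ and G₂ admit disjoint covers. -/

import Mathlib

/-- The colour of the `i`-th edge of an alternating sequence whose first edge
has colour `b` (`true` = red, `false` = blue). -/
def altColour (b : Bool) (i : ℕ) : Bool := if Even i then b else !b

/-- The adjacency relation of the red graph `G₁` if `b = true`, and of the
blue graph `G₂` if `b = false`. -/
def colAdj {V : Type*} (G₁ G₂ : SimpleGraph V) (b : Bool) : V → V → Prop :=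
  if b then G₁.Adj else G₂.Adj

/-- `v 0, v 1, …, v (m-1)` is an alternating cycle of length `m` in the
coloured graph `G₁ ∪ G₂` (edges of `G₁` red, edges of `G₂` blue), whose first
edge `{v 0, v 1}` has colour `b`: the vertices are distinct and the colours of
consecutive edges alternate around the cycle.  For even `m` this is an even
alternating cycle; for odd `m` the two edges at `v 0` both get colour `b`
(an odd alternating cycle, with the roles of red and blue possibly swapped). -/
def IsAltCycle {V : Type*} (G₁ G₂ : SimpleGraph V) (b : Bool) (m : ℕ)
    (v : ℕ → V) : Prop :=
  (∀ i < m, ∀ j < m, v i = v j → i = j) ∧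
  ∀ i < m, colAdj G₁ G₂ (altColour b i) (v i) (v ((i + 1) % m))

/-- The coloured graph `G₁ ∪ G₂` contains an alternating cycle (even or odd). -/
def HasAltCycle {V : Type*} (G₁ G₂ : SimpleGraph V) : Prop :=
  ∃ (b : Bool) (m : ℕ) (v : ℕ → V), 2 ≤ m ∧ IsAltCycle G₁ G₂ b m v

/-- `G₁` and `G₂` admit disjoint covers. -/
def GraphDisjointCovers {V : Type*} (G₁ G₂ : SimpleGraph V) : Prop :=
  ∃ C₁ C₂ : Set V, Disjoint C₁ C₂ ∧
    (∀ x y, G₁.Adj x y → x ∈ C₁ ∨ y ∈ C₁) ∧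
    (∀ x y, G₂.Adj x y → x ∈ C₂ ∨ y ∈ C₂)

/-! ### Auxiliary lemmas -/

lemma altColour_succ (b : Bool) (i : ℕ) : altColour b (i + 1) = !(altColour b i) := by
  simp only [altColour, Nat.even_add_one]
  by_cases h : Even i <;> simp [h]

lemma altColour_not (b : Bool) (i : ℕ) : altColour (!b) i = !(altColour b i) := by
  simp only [altColour]
  by_cases h : Even i <;> simp [h]

lemma altColour_add (b : Bool) (i k : ℕ) :
    altColour (altColour b i) k = altColour b (i + k) := by
  simp only [altColour, Nat.even_add]
  by_cases hi : Even i <;> by_cases hk : Even k <;> simp [hi, hk]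

lemma colAdj_ne {V : Type*} (G₁ G₂ : SimpleGraph V) {b : Bool} {x y : V}
    (h : colAdj G₁ G₂ b x y) : x ≠ y := by
  cases b
  · exact G₂.ne_of_adj (by simpa [colAdj] using h)
  · exact G₁.ne_of_adj (by simpa [colAdj] using h)

lemma colAdj_symm {V : Type*} (G₁ G₂ : SimpleGraph V) {b : Bool} {x y : V}
    (h : colAdj G₁ G₂ b x y) : colAdj G₁ G₂ b y x := by
  cases b
  · simpa [colAdj] using G₂.adj_symm (by simpa [colAdj] using h)
  · simpa [colAdj] using G₁.adj_symm (by simpa [colAdj] using h)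

/-- A closed alternating walk (vertices not necessarily distinct). -/
def PreCycle {V : Type*} (G₁ G₂ : SimpleGraph V) (m : ℕ) : Prop :=
  2 ≤ m ∧ ∃ (b : Bool) (v : ℕ → V),
    ∀ i < m, colAdj G₁ G₂ (altColour b i) (v i) (v ((i + 1) % m))

lemma preCycle_sub {V : Type*} (G₁ G₂ : SimpleGraph V) {m : ℕ} {b : Bool} {v : ℕ → V}
    (hv : ∀ i < m, colAdj G₁ G₂ (altColour b i) (v i) (v ((i + 1) % m)))
    {i j : ℕ} (hij : i < j) (hj : j < m) (heq : v i = v j) :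
    PreCycle G₁ G₂ (j - i) ∧ j - i < m := by
  have h2 : i + 2 ≤ j := by
    by_contra hcon
    push_neg at hcon
    have hji : j = i + 1 := by omega
    have hedge := hv i (by omega)
    rw [Nat.mod_eq_of_lt (by omega)] at hedge
    exact colAdj_ne G₁ G₂ hedge (by rw [heq, hji])
  refine ⟨⟨by omega, altColour b i, fun k => v (i + k), ?_⟩, by omega⟩
  intro k hk
  rw [altColour_add]
  by_cases hlast : k + 1 < j - i
  · rw [Nat.mod_eq_of_lt hlast]
    have := hv (i + k) (by omega)
    rwa [Nat.mod_eq_of_lt (by omega)] at this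
  · have hk1 : k + 1 = j - i := by omega
    rw [hk1, Nat.mod_self]
    have hthis := hv (i + k) (by omega)
    rw [Nat.mod_eq_of_lt (by omega), show i + k + 1 = j from by omega, ← heq] at hthis
    simpa using hthis

lemma hasAltCycle_of_preCycle {V : Type*} (G₁ G₂ : SimpleGraph V)
    (h : ∃ m, PreCycle G₁ G₂ m) : HasAltCycle G₁ G₂ := by
  classical
  obtain ⟨hm2, b, v, hv⟩ := Nat.find_spec h
  refine ⟨b, Nat.find h, v, hm2, ?_, hv⟩
  intro i hi j hj heq
  by_contra hne
  rcases Nat.lt_or_ge i j with hlt | hge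
  · obtain ⟨hpc, hsm⟩ := preCycle_sub G₁ G₂ hv hlt hj heq
    exact Nat.find_min h hsm hpc
  · have hlt : j < i := by omega
    obtain ⟨hpc, hsm⟩ := preCycle_sub G₁ G₂ hv hlt hi heq.symm
    exact Nat.find_min h hsm hpc

/-- One step of the 2-SAT implication graph: from literal `(u, a)` along an
edge of colour `!a` to literal `(v, !a)`. -/
def ImpStep {V : Type*} (G₁ G₂ : SimpleGraph V) (p q : V × Bool) : Prop :=
  q.2 = !p.2 ∧ colAdj G₁ G₂ q.2 p.1 q.1

lemma impStep_skew {V : Type*} (G₁ G₂ : SimpleGraph V) {p q : V × Bool}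
    (h : ImpStep G₁ G₂ p q) : ImpStep G₁ G₂ (q.1, !q.2) (p.1, !p.2) := by
  obtain ⟨h1, h2⟩ := h
  refine ⟨by rw [h1, Bool.not_not], ?_⟩
  simp only
  have h3 : (!p.2) = q.2 := by rw [h1]
  rw [h3]
  exact colAdj_symm G₁ G₂ h2

lemma impReach_skew {V : Type*} (G₁ G₂ : SimpleGraph V) {p q : V × Bool}
    (h : Relation.ReflTransGen (ImpStep G₁ G₂) p q) :
    Relation.ReflTransGen (ImpStep G₁ G₂) (q.1, !q.2) (p.1, !p.2) := by
  induction h with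
  | refl => exact Relation.ReflTransGen.refl
  | tail _ hbc ih =>
    exact Relation.ReflTransGen.head (impStep_skew G₁ G₂ hbc) ih

lemma exists_chain {V : Type*} (G₁ G₂ : SimpleGraph V) {p q : V × Bool}
    (h : Relation.ReflTransGen (ImpStep G₁ G₂) p q) :
    ∃ (n : ℕ) (f : ℕ → V × Bool), f 0 = p ∧ f n = q ∧
      ∀ i < n, ImpStep G₁ G₂ (f i) (f (i + 1)) := by
  induction h with
  | refl => exact ⟨0, fun _ => p, rfl, rfl, by omega⟩
  | @tail b c _ hbc ih =>
    obtain ⟨n, f, h0, hn, hstep⟩ := ih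
    refine ⟨n + 1, fun i => if i ≤ n then f i else c, by simpa using h0,
      show (if n + 1 ≤ n then f (n + 1) else c) = c from by rw [if_neg (by omega)], ?_⟩
    intro i hi
    rcases Nat.lt_or_ge i n with h' | h'
    · simp only [if_pos (by omega : i ≤ n), if_pos (by omega : i + 1 ≤ n)]
      exact hstep i h'
    · have : i = n := by omega
      subst this
      simp only [if_pos le_rfl, if_neg (by omega : ¬ i + 1 ≤ i)]
      rw [hn]; exact hbc

lemma chain_colour {V : Type*} (G₁ G₂ : SimpleGraph V) {n : ℕ} {f : ℕ → V × Bool}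
    (hstep : ∀ i < n, ImpStep G₁ G₂ (f i) (f (i + 1))) :
    ∀ k ≤ n, (f k).2 = altColour (f 0).2 k := by
  intro k
  induction k with
  | zero => intro _; simp [altColour]
  | succ k ih =>
    intro hk
    rw [(hstep k (by omega)).1, ih (by omega), altColour_succ]

lemma no_contra {V : Type*} (G₁ G₂ : SimpleGraph V) (h : ¬ HasAltCycle G₁ G₂)
    (l : V × Bool) :
    ¬ (Relation.ReflTransGen (ImpStep G₁ G₂) l (l.1, !l.2) ∧
       Relation.ReflTransGen (ImpStep G₁ G₂) (l.1, !l.2) l) := by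
  rintro ⟨h1, h2⟩
  apply h
  apply hasAltCycle_of_preCycle
  obtain ⟨n, f, hf0, hfn, hfs⟩ := exists_chain G₁ G₂ h1
  obtain ⟨m, g, hg0, hgm, hgs⟩ := exists_chain G₁ G₂ h2
  have hn1 : 1 ≤ n := by
    rcases Nat.eq_zero_or_pos n with h0 | h0
    · exfalso
      rw [h0, hf0] at hfn
      have h3 : l.2 = !l.2 := congrArg Prod.snd hfn
      simp at h3
    · exact h0
  have hm1 : 1 ≤ m := by
    rcases Nat.eq_zero_or_pos m with h0 | h0
    · exfalso
      rw [h0, hg0] at hgm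
      have h3 : l.2 = !l.2 := (congrArg Prod.snd hgm).symm
      simp at h3
    · exact h0
  set N := n + m with hN
  set F : ℕ → V × Bool := fun i => if i ≤ n then f i else g (i - n) with hF
  have hF0 : F 0 = l := by simp [hF, hf0]
  have hFN : F N = l := by
    by_cases hmn : N ≤ n
    · have : m = 0 := by omega
      omega
    · simp only [hF, if_neg hmn]
      rw [show N - n = m from by omega, hgm]
  have hFs : ∀ i < N, ImpStep G₁ G₂ (F i) (F (i + 1)) := by
    intro i hi
    rcases Nat.lt_or_ge i n with h' | h'
    · simp only [hF, if_pos (by omega : i ≤ n), if_pos (by omega : i + 1 ≤ n)]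
      exact hfs i h'
    · have hFi : F i = g (i - n) := by
        rcases Nat.eq_or_lt_of_le h' with he | hl
        · simp only [hF, if_pos (le_of_eq he.symm)]
          rw [← he, Nat.sub_self, hg0, ← hfn]
        · simp [hF, if_neg (by omega : ¬ i ≤ n)]
      have hFi1 : F (i + 1) = g (i - n + 1) := by
        simp only [hF, if_neg (by omega : ¬ i + 1 ≤ n)]
        rw [show i + 1 - n = i - n + 1 from by omega]
      rw [hFi, hFi1]
      exact hgs (i - n) (by omega)
  have hcol : ∀ k ≤ N, (F k).2 = altColour l.2 k := by
    have := chain_colour G₁ G₂ hFs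
    rwa [hF0] at this
  refine ⟨N, by omega, !l.2, fun i => (F i).1, ?_⟩
  intro i hi
  obtain ⟨hc, hadj⟩ := hFs i hi
  have hcolour : (F (i + 1)).2 = altColour (!l.2) i := by
    rw [hcol (i + 1) (by omega), altColour_succ, ← altColour_not]
  rw [hcolour] at hadj
  show colAdj G₁ G₂ (altColour (!l.2) i) (F i).1 (F ((i + 1) % N)).1
  by_cases hlast : i + 1 < N
  · rwa [Nat.mod_eq_of_lt hlast]
  · have hiN : i + 1 = N := by omega
    have hEq : F ((i + 1) % N) = F (i + 1) := by
      rw [show (i + 1) % N = 0 from by rw [hiN, Nat.mod_self], hF0, hiN, hFN]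
    rw [hEq]
    exact hadj

/-- If the coloured graph `G₁ ∪ G₂` (edges of `G₁` red, edges of `G₂` blue)
contains no alternating cycle, neither even nor odd, then `G₁` and `G₂` admit
disjoint covers. -/
theorem disjointCovers_of_no_altCycle {V : Type*} [Fintype V]
    (G₁ G₂ : SimpleGraph V) (h : ¬ HasAltCycle G₁ G₂) :
    GraphDisjointCovers G₁ G₂ := by
  classical
  set R : V × Bool → V × Bool → Prop := Relation.ReflTransGen (ImpStep G₁ G₂) with hR
  -- setoid of mutually reachable literals
  let st : Setoid (V × Bool) :=
    ⟨fun p q => R p q ∧ R q p,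
     ⟨fun p => ⟨Relation.ReflTransGen.refl, Relation.ReflTransGen.refl⟩,
      fun h => ⟨h.2, h.1⟩,
      fun h1 h2 => ⟨h1.1.trans h2.1, h2.2.trans h1.2⟩⟩⟩
  let S : Quotient st → Quotient st → Prop :=
    Quotient.lift₂ (fun p q => R p q)
      (fun a b c d hac hbd => propext
        ⟨fun hab => hac.2.trans (hab.trans hbd.1),
         fun hcd => hac.1.trans (hcd.trans hbd.2)⟩)
  haveI : IsRefl (Quotient st) S :=
    ⟨fun a => Quotient.inductionOn a fun _ => Relation.ReflTransGen.refl⟩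
  haveI : IsTrans (Quotient st) S :=
    ⟨fun a b c => Quotient.inductionOn₃ a b c fun _ _ _ hpq hqr =>
      Relation.ReflTransGen.trans hpq hqr⟩
  haveI : IsAntisymm (Quotient st) S :=
    ⟨fun a b => Quotient.inductionOn₂ a b fun p q hpq hqp => Quotient.sound ⟨hpq, hqp⟩⟩
  haveI : IsPreorder (Quotient st) S := {}
  haveI : IsPartialOrder (Quotient st) S := {}
  obtain ⟨T, hT, hST⟩ := extend_partialOrder S
  haveI := hT
  set cls : V × Bool → Quotient st := fun p => Quotient.mk st p with hcls
  have hRT : ∀ p q : V × Bool, R p q → T (cls p) (cls q) := fun p q hpq => hST _ _ hpq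
  -- the truth value of a literal
  set σ : V × Bool → Prop := fun l => T (cls (l.1, !l.2)) (cls l) with hσ
  have hdist : ∀ l : V × Bool, cls l ≠ cls (l.1, !l.2) := by
    intro l heq
    have := Quotient.exact heq
    exact no_contra G₁ G₂ h l ⟨this.1, this.2⟩
  have himp : ∀ l l' : V × Bool, ImpStep G₁ G₂ l l' → σ l → σ l' := by
    intro l l' hstep hl
    have h1 : T (cls l) (cls l') := hRT _ _ (Relation.ReflTransGen.single hstep)
    have h2 : T (cls (l'.1, !l'.2)) (cls (l.1, !l.2)) :=
      hRT _ _ (Relation.ReflTransGen.single (impStep_skew G₁ G₂ hstep))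
    exact IsTrans.trans (r := T) _ _ _ h2 (IsTrans.trans (r := T) _ _ _ hl h1)
  have htotal : ∀ l : V × Bool, ¬ σ l → σ (l.1, !l.2) := by
    intro l hl
    have heq : ((l.1, !l.2).1, !(l.1, !l.2).2) = l := by simp
    rw [hσ]
    simp only [heq]
    rcases total_of T (cls (l.1, !l.2)) (cls l) with ht | ht
    · exact absurd ht hl
    · exact ht
  refine ⟨{x | σ (x, true)}, {x | σ (x, false)}, ?_, ?_, ?_⟩
  · rw [Set.disjoint_left]
    intro x hx1 hx2
    have h1 : T (cls (x, false)) (cls (x, true)) := hx1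
    have h2 : T (cls (x, true)) (cls (x, false)) := hx2
    exact hdist (x, true) (antisymm (r := T) h2 h1)
  · intro x y hxy
    by_cases hx : σ (x, true)
    · exact Or.inl hx
    · right
      have hxf : σ (x, false) := htotal (x, true) hx
      refine himp (x, false) (y, true) ⟨rfl, ?_⟩ hxf
      simpa [colAdj] using hxy
  · intro x y hxy
    by_cases hx : σ (x, false)
    · exact Or.inl hx
    · right
      have hxt : σ (x, true) := htotal (x, false) hx
      refine himp (x, true) (y, false) ⟨rfl, ?_⟩ hxt
      simpa [colAdj] using hxy
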